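/- Let W_1, …, W_L be nonzero real matrices whose harmonic mean of the ratios ‖W_i‖_F / ‖W_i‖_σ is at most √2 · (B/√2)^{k/L} · √((L+1)/L) for some B > 0 and 1 ≤ k < L. Then there exists an index l such that for all ε > 0, rank_ε(W_l) ≤ (2/ε²) · (B/√2)^{2k/L} · ((L+1)/L) · ‖W_l‖_σ². -/

import Mathlib

noncomputable def singularValues {m n : ℕ} (A : Matrix (Fin m) (Fin n) ℝ) : Fin n → ℝ :=
  fun i => Real.sqrt ((Matrix.isHermitian_conjTranspose_mul_self A).eigenvalues i)

noncomputable def epsRank {m n : ℕ} (A : Matrix (Fin m) (Fin n) ℝ) (ε : ℝ) : ℕ :=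
  (Finset.univ.filter (fun i => ε < singularValues A i)).card

noncomputable def frobNorm {m n : ℕ} (A : Matrix (Fin m) (Fin n) ℝ) : ℝ :=
  Real.sqrt (∑ i, ∑ j, (A i j) ^ 2)

noncomputable def opNorm {m n : ℕ} (A : Matrix (Fin m) (Fin n) ℝ) : ℝ :=
  ⨆ i, singularValues A i

lemma trace_eq_sum_eigen {N : ℕ} (A : Matrix (Fin N) (Fin N) ℝ) (hA : A.IsHermitian) :
    A.trace = ∑ i, hA.eigenvalues i := by
  simpa using hA.trace_eq_sum_eigenvalues

lemma eig_nonneg {m n : ℕ} (A : Matrix (Fin m) (Fin n) ℝ) (i : Fin n) :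
    0 ≤ (Matrix.isHermitian_conjTranspose_mul_self A).eigenvalues i := by
  have h : (Matrix.conjTranspose A * A).PosSemidef := by
    have := Matrix.posSemidef_conjTranspose_mul_self A
    simpa using this
  exact h.eigenvalues_nonneg i

lemma sv_nonneg {m n : ℕ} (A : Matrix (Fin m) (Fin n) ℝ) (i : Fin n) :
    0 ≤ singularValues A i := Real.sqrt_nonneg _

lemma sum_sv_sq {m n : ℕ} (A : Matrix (Fin m) (Fin n) ℝ) :
    ∑ i, (singularValues A i) ^ 2 = ∑ i, ∑ j, (A i j) ^ 2 := by
  have h1 : ∀ i, (singularValues A i) ^ 2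
      = (Matrix.isHermitian_conjTranspose_mul_self A).eigenvalues i := fun i =>
    Real.sq_sqrt (eig_nonneg A i)
  calc ∑ i, (singularValues A i) ^ 2
      = (Matrix.conjTranspose A * A).trace := by
        rw [trace_eq_sum_eigen _ (Matrix.isHermitian_conjTranspose_mul_self A)]
        exact Finset.sum_congr rfl fun i _ => h1 i
    _ = ∑ i, ∑ j, (A i j) ^ 2 := by
        rw [Matrix.trace]
        simp [Matrix.mul_apply, Matrix.diag]
        rw [Finset.sum_comm]
        exact Finset.sum_congr rfl fun i _ => Finset.sum_congr rfl fun j _ => (sq (A i j)).symm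

lemma frob_sq {m n : ℕ} (A : Matrix (Fin m) (Fin n) ℝ) :
    frobNorm A ^ 2 = ∑ i, (singularValues A i) ^ 2 := by
  rw [frobNorm, sum_sv_sq, Real.sq_sqrt]
  positivity

lemma frob_pos {m n : ℕ} (A : Matrix (Fin m) (Fin n) ℝ) (hA : A ≠ 0) :
    0 < frobNorm A := by
  rw [frobNorm]
  apply Real.sqrt_pos.mpr
  obtain ⟨i, j, hij⟩ : ∃ i j, A i j ≠ 0 := by
    by_contra h; push_neg at h; exact hA (by ext i j; simp [h])
  calc (0:ℝ) < (A i j)^2 := by positivity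
    _ ≤ ∑ j', (A i j') ^ 2 := Finset.single_le_sum (f := fun j' => (A i j') ^ 2)
        (fun _ _ => sq_nonneg _) (Finset.mem_univ j)
    _ ≤ ∑ i', ∑ j', (A i' j') ^ 2 := Finset.single_le_sum
        (f := fun i' => ∑ j', (A i' j') ^ 2)
        (fun _ _ => Finset.sum_nonneg fun _ _ => sq_nonneg _) (Finset.mem_univ i)

lemma sv_le_op {m n : ℕ} (A : Matrix (Fin m) (Fin n) ℝ) (i : Fin n) :
    singularValues A i ≤ opNorm A :=
  le_ciSup (Set.Finite.bddAbove (Set.finite_range _)) i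

lemma op_pos {m n : ℕ} (A : Matrix (Fin m) (Fin n) ℝ) (hA : A ≠ 0) :
    0 < opNorm A := by
  have hf := frob_pos A hA
  have hfs : 0 < frobNorm A ^ 2 := by positivity
  rw [frob_sq] at hfs
  obtain ⟨i, -, hi⟩ := Finset.exists_lt_of_sum_lt (by simpa using hfs : ∑ _i : Fin n, (0:ℝ) < _)
  have : 0 < singularValues A i := by
    rcases lt_or_ge 0 (singularValues A i) with h | h
    · exact h
    · nlinarith [sv_nonneg A i]
  exact this.trans_le (sv_le_op A i)

theorem exists_bottleneck_layer_class {L k : ℕ} (hk : 1 ≤ k) (hkL : k < L)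
    (m n : Fin L → ℕ) (W : (i : Fin L) → Matrix (Fin (m i)) (Fin (n i)) ℝ)
    (hW : ∀ i, W i ≠ 0) (B : ℝ) (hB : 0 < B)
    (hHM : (L : ℝ) / (∑ i, (frobNorm (W i) / opNorm (W i))⁻¹) ≤
      Real.sqrt 2 * Real.rpow (B / Real.sqrt 2) ((k : ℝ) / (L : ℝ)) *
        Real.sqrt (((L : ℝ) + 1) / (L : ℝ))) :
    ∃ l, ∀ ε : ℝ, 0 < ε →
      (epsRank (W l) ε : ℝ) ≤
        (2 / ε ^ 2) * Real.rpow (B / Real.sqrt 2) ((2 * k : ℝ) / (L : ℝ)) *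
          (((L : ℝ) + 1) / (L : ℝ)) * opNorm (W l) ^ 2 := by
  have hL : 0 < L := lt_of_le_of_lt (Nat.zero_le k) hkL
  have hLR : (0:ℝ) < L := Nat.cast_pos.mpr hL
  have hNe : Nonempty (Fin L) := Fin.pos_iff_nonempty.mp hL
  set C := Real.sqrt 2 * Real.rpow (B / Real.sqrt 2) ((k : ℝ) / (L : ℝ)) *
      Real.sqrt (((L : ℝ) + 1) / (L : ℝ)) with hC
  have hBs : 0 < B / Real.sqrt 2 := by positivity
  have hCpos : 0 < C := by
    apply mul_pos (mul_pos (by positivity) (Real.rpow_pos_of_pos hBs _))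
    apply Real.sqrt_pos.mpr; positivity
  have hr : ∀ i, 0 < frobNorm (W i) / opNorm (W i) := fun i =>
    div_pos (frob_pos _ (hW i)) (op_pos _ (hW i))
  -- find l with ratio ≤ C
  have hl : ∃ l, frobNorm (W l) / opNorm (W l) ≤ C := by
    by_contra h
    push_neg at h
    have hsum : ∑ i, (frobNorm (W i) / opNorm (W i))⁻¹ < ∑ _i : Fin L, C⁻¹ :=
      Finset.sum_lt_sum_of_nonempty Finset.univ_nonempty fun i _ =>
        inv_strictAnti₀ hCpos (h i)
    rw [Finset.sum_const, Finset.card_univ, Fintype.card_fin, nsmul_eq_mul] at hsum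
    have hsumpos : 0 < ∑ i, (frobNorm (W i) / opNorm (W i))⁻¹ :=
      Finset.sum_pos (fun i _ => inv_pos.mpr (hr i)) Finset.univ_nonempty
    have : C < (L : ℝ) / (∑ i, (frobNorm (W i) / opNorm (W i))⁻¹) := by
      rw [lt_div_iff₀ hsumpos]
      calc C * ∑ i, (frobNorm (W i) / opNorm (W i))⁻¹
          < C * ((L:ℝ) * C⁻¹) := by
            exact (mul_lt_mul_iff_right₀ hCpos).mpr hsum
        _ = (L:ℝ) := by field_simp
    linarith [hHM]
  obtain ⟨l, hl⟩ := hl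
  refine ⟨l, fun ε hε => ?_⟩
  have hop := op_pos _ (hW l)
  have hfle : frobNorm (W l) ≤ C * opNorm (W l) := by
    rwa [div_le_iff₀ hop] at hl
  -- epsRank bound: ε² * epsRank ≤ frob²
  have hcard : ε ^ 2 * (epsRank (W l) ε : ℝ) ≤ frobNorm (W l) ^ 2 := by
    rw [frob_sq, epsRank]
    calc ε ^ 2 * ((Finset.univ.filter (fun i => ε < singularValues (W l) i)).card : ℝ)
        = ∑ _i ∈ Finset.univ.filter (fun i => ε < singularValues (W l) i), ε ^ 2 := by
          rw [Finset.sum_const, nsmul_eq_mul, mul_comm]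
      _ ≤ ∑ i ∈ Finset.univ.filter (fun i => ε < singularValues (W l) i),
            (singularValues (W l) i) ^ 2 := by
          apply Finset.sum_le_sum
          intro i hi
          have := (Finset.mem_filter.mp hi).2
          nlinarith
      _ ≤ ∑ i, (singularValues (W l) i) ^ 2 :=
          Finset.sum_le_sum_of_subset_of_nonneg (Finset.filter_subset _ _)
            (fun _ _ _ => sq_nonneg _)
  have hC2 : C ^ 2 = 2 * Real.rpow (B / Real.sqrt 2) ((2 * k : ℝ) / (L : ℝ)) *
      (((L : ℝ) + 1) / (L : ℝ)) := by
    rw [hC]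
    simp only [Real.rpow_eq_pow]
    rw [mul_pow, mul_pow, Real.sq_sqrt (by norm_num : (0:ℝ) ≤ 2),
      Real.sq_sqrt (by positivity : (0:ℝ) ≤ ((L:ℝ)+1)/(L:ℝ)),
      ← Real.rpow_natCast ((B / Real.sqrt 2) ^ ((k:ℝ)/(L:ℝ))) 2, ← Real.rpow_mul hBs.le]
    norm_num
    rw [show (k:ℝ) / (L:ℝ) * 2 = 2 * (k:ℝ) / (L:ℝ) by ring]
    exact Or.inl rfl
  have hfsq : frobNorm (W l) ^ 2 ≤ C ^ 2 * opNorm (W l) ^ 2 := by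
    rw [← mul_pow]
    exact pow_le_pow_left₀ (frob_pos _ (hW l)).le hfle 2
  have key : (epsRank (W l) ε : ℝ) ≤ C ^ 2 * opNorm (W l) ^ 2 / ε ^ 2 := by
    rw [le_div_iff₀ (by positivity)]
    calc (epsRank (W l) ε : ℝ) * ε ^ 2 = ε ^ 2 * (epsRank (W l) ε : ℝ) := by ring
      _ ≤ frobNorm (W l) ^ 2 := hcard
      _ ≤ C ^ 2 * opNorm (W l) ^ 2 := hfsq
  calc (epsRank (W l) ε : ℝ) ≤ C ^ 2 * opNorm (W l) ^ 2 / ε ^ 2 := key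
    _ = (2 / ε ^ 2) * Real.rpow (B / Real.sqrt 2) ((2 * k : ℝ) / (L : ℝ)) *
          (((L : ℝ) + 1) / (L : ℝ)) * opNorm (W l) ^ 2 := by
        simp only [Real.rpow_eq_pow] at hC2 ⊢; rw [hC2]; ring
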